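/- Let M > 0, let g : (0,∞) → ℝ satisfy ∫₀^∞ |g(x)| dx < ∞ and ∫₀^∞ |g(x)|/x dx < ∞, and let φ : (0,∞) → ℝ be square integrable. Set g^×(t) = ∫₀^∞ {x/t} g(x)/x dx. Then (∫₀^M g(x) dx)² ≤ 3M · ∫_M^∞ (φ(t) - g^×(t))² dt + 3M · ∫_M^∞ φ(t)² dt + 3 · (∫_M^∞ |g(x)| dx)². -/

import Mathlib

open MeasureTheory Set

/-- The multiplicative convolution of `g` with the fractional part:
`g^×(t) = ∫₀^∞ {x/t} g(x)/x dx`. -/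
noncomputable def mulConvFract (g : ℝ → ℝ) (t : ℝ) : ℝ :=
  ∫ x in Ioi (0 : ℝ), Int.fract (x / t) * g x / x

lemma fract_le_div {t x : ℝ} (ht : 0 < t) (hx : 0 ≤ x) : Int.fract (x / t) ≤ x / t := by
  have h : (0:ℝ) ≤ x / t := div_nonneg hx ht.le
  have h1 : (0:ℤ) ≤ ⌊x / t⌋ := Int.floor_nonneg.mpr h
  have h2 : x / t - ⌊x / t⌋ = Int.fract (x / t) := Int.self_sub_floor _
  have h3 : (0:ℝ) ≤ (⌊x / t⌋ : ℝ) := by exact_mod_cast h1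
  linarith

lemma abs_kernel_le {t x : ℝ} (ht : 0 < t) (hx : 0 < x) (c : ℝ) :
    |Int.fract (x / t) * c / x| ≤ |c| / t := by
  have h0 : 0 ≤ Int.fract (x / t) := Int.fract_nonneg _
  have h1 : Int.fract (x / t) ≤ x / t := fract_le_div ht hx.le
  rw [abs_div, abs_mul, abs_of_nonneg h0, abs_of_pos hx, div_le_div_iff₀ hx ht]
  have habs : 0 ≤ |c| := abs_nonneg c
  calc Int.fract (x / t) * |c| * t ≤ (x / t) * |c| * t := mul_le_mul_of_nonneg_right (mul_le_mul_of_nonneg_right h1 habs) ht.le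
    _ = |c| * x := by field_simp

lemma integrableOn_kernel (g : ℝ → ℝ) (hg : IntegrableOn g (Ioi 0) volume) {t : ℝ}
    (ht : 0 < t) :
    IntegrableOn (fun x => Int.fract (x / t) * g x / x) (Ioi 0) volume := by
  apply Integrable.mono' (hg.norm.div_const t)
  · have h1 : Measurable (fun x : ℝ => Int.fract (x / t)) :=
      measurable_fract.comp (measurable_id.div_const t)
    exact ((h1.aemeasurable.mul hg.1.aemeasurable).div aemeasurable_id).aestronglyMeasurable
  · filter_upwards [ae_restrict_mem measurableSet_Ioi] with x hx
    calc ‖Int.fract (x / t) * g x / x‖ = |Int.fract (x / t) * g x / x| := rfl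
      _ ≤ |g x| / t := abs_kernel_le ht hx (g x)
      _ = ‖g x‖ / t := rfl

lemma mulConvFract_split (g : ℝ → ℝ) (hg : IntegrableOn g (Ioi 0) volume) {t : ℝ}
    (ht : 0 < t) :
    mulConvFract g t = (∫ x in Ioo 0 t, g x) / t
      + ∫ x in Ici t, Int.fract (x / t) * g x / x := by
  have hker := integrableOn_kernel g hg ht
  have hU : Ioo (0:ℝ) t ∪ Ici t = Ioi 0 := Ioo_union_Ici_eq_Ioi ht
  have hdisj : Disjoint (Ioo (0:ℝ) t) (Ici t) := by
    rw [Set.disjoint_left]; intro x hx1 hx2; exact absurd hx2 (not_le.mpr hx1.2)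
  rw [mulConvFract, ← hU, setIntegral_union hdisj measurableSet_Ici
    (hker.mono_set (hU ▸ subset_union_left)) (hker.mono_set (hU ▸ subset_union_right))]
  congr 1
  have heq : EqOn (fun x => Int.fract (x / t) * g x / x) (fun x => g x / t) (Ioo 0 t) := by
    intro x hx
    have hfr : Int.fract (x / t) = x / t :=
      Int.fract_eq_self.mpr ⟨div_nonneg hx.1.le ht.le, (div_lt_one ht).mpr hx.2⟩
    have hx0 : x ≠ 0 := hx.1.ne'
    have ht0 : t ≠ 0 := ht.ne'
    simp only [hfr]
    field_simp
  rw [setIntegral_congr_fun measurableSet_Ioo heq, integral_div]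

lemma abs_setIntegral_le (f : ℝ → ℝ) (s : Set ℝ) :
    |∫ x in s, f x| ≤ ∫ x in s, |f x| := by
  simpa [Real.norm_eq_abs] using
    norm_integral_le_integral_norm (μ := volume.restrict s) f

lemma key_bound (M : ℝ) (hM : 0 < M) (g : ℝ → ℝ) (hg : IntegrableOn g (Ioi 0) volume)
    {t : ℝ} (ht : M < t) (c : ℝ) :
    |∫ x in Ioo 0 M, g x| ≤
      t * |c - mulConvFract g t| + t * |c| + ∫ x in Ioi M, |g x| := by
  have ht0 : 0 < t := hM.trans ht
  set T : ℝ := ∫ x in Ici t, Int.fract (x / t) * g x / x with hT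
  have hsplit := mulConvFract_split g hg ht0
  have hU2 : Ioo (0:ℝ) M ∪ Ico M t = Ioo 0 t := Ioo_union_Ico_eq_Ioo hM ht.le
  have hdisj2 : Disjoint (Ioo (0:ℝ) M) (Ico M t) := by
    rw [Set.disjoint_left]; intro x hx1 hx2; exact absurd hx2.1 (not_le.mpr hx1.2)
  have hgI : IntegrableOn g (Ioo 0 t) volume := hg.mono_set Ioo_subset_Ioi_self
  have hsum : (∫ x in Ioo 0 t, g x) = (∫ x in Ioo 0 M, g x) + ∫ x in Ico M t, g x := by
    rw [← hU2, setIntegral_union hdisj2 measurableSet_Ico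
      (hgI.mono_set (hU2 ▸ subset_union_left)) (hgI.mono_set (hU2 ▸ subset_union_right))]
  have hA : (∫ x in Ioo 0 M, g x)
      = t * mulConvFract g t - t * T - ∫ x in Ico M t, g x := by
    rw [hsplit, mul_add, mul_div_cancel₀ _ ht0.ne']
    linarith [hsum]
  have hsub : Ici t ⊆ Ioi (0:ℝ) := fun x hx => lt_of_lt_of_le ht0 hx
  have hgn : IntegrableOn (fun x => |g x|) (Ioi 0) volume := hg.abs
  have hTb : t * |T| ≤ ∫ x in Ici t, |g x| := by
    have hker : IntegrableOn (fun x => Int.fract (x / t) * g x / x) (Ici t) volume :=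
      (integrableOn_kernel g hg ht0).mono_set hsub
    have h1 : |T| ≤ ∫ x in Ici t, |Int.fract (x / t) * g x / x| := abs_setIntegral_le _ _
    have h2 : (∫ x in Ici t, |Int.fract (x / t) * g x / x|) ≤ ∫ x in Ici t, |g x| / t := by
      apply setIntegral_mono_on hker.abs ((hgn.mono_set hsub).div_const t) measurableSet_Ici
      intro x hx
      exact abs_kernel_le ht0 (lt_of_lt_of_le ht0 hx) (g x)
    have h3 : (∫ x in Ici t, |g x| / t) = (∫ x in Ici t, |g x|) / t := integral_div t _
    have h4 : |T| ≤ (∫ x in Ici t, |g x|) / t := by linarith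
    calc t * |T| ≤ t * ((∫ x in Ici t, |g x|) / t) :=
          mul_le_mul_of_nonneg_left h4 ht0.le
      _ = ∫ x in Ici t, |g x| := by field_simp
  have hIb : |∫ x in Ico M t, g x| ≤ ∫ x in Ico M t, |g x| := abs_setIntegral_le _ _
  have hdisj3 : Disjoint (Ico M t) (Ici t) := by
    rw [Set.disjoint_left]; intro x hx1 hx2; exact absurd hx2 (not_le.mpr hx1.2)
  have hU3 : Ico M t ∪ Ici t = Ici M := Ico_union_Ici_eq_Ici ht.le
  have hsub3 : Ici M ⊆ Ioi (0:ℝ) := fun x hx => lt_of_lt_of_le hM hx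
  have hsum2 : (∫ x in Ico M t, |g x|) + (∫ x in Ici t, |g x|) = ∫ x in Ioi M, |g x| := by
    rw [← integral_Ici_eq_integral_Ioi, ← hU3, setIntegral_union hdisj3 measurableSet_Ici
      ((hgn.mono_set hsub3).mono_set (hU3 ▸ subset_union_left))
      ((hgn.mono_set hsub3).mono_set (hU3 ▸ subset_union_right))]
  have e : t * mulConvFract g t - t * T - (∫ x in Ico M t, g x)
      = (t * (mulConvFract g t - c) + t * c) - (t * T + ∫ x in Ico M t, g x) := by ring
  have habs : |∫ x in Ioo 0 M, g x|
      ≤ t * |mulConvFract g t - c| + t * |c| + (t * |T| + |∫ x in Ico M t, g x|) := by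
    rw [hA, e]
    calc |(t * (mulConvFract g t - c) + t * c) - (t * T + ∫ x in Ico M t, g x)|
        ≤ |t * (mulConvFract g t - c) + t * c| + |t * T + ∫ x in Ico M t, g x| :=
          abs_sub _ _
      _ ≤ (|t * (mulConvFract g t - c)| + |t * c|)
            + (|t * T| + |∫ x in Ico M t, g x|) :=
          add_le_add (abs_add_le _ _) (abs_add_le _ _)
      _ = t * |mulConvFract g t - c| + t * |c| + (t * |T| + |∫ x in Ico M t, g x|) := by
          rw [abs_mul, abs_mul, abs_mul, abs_of_pos ht0]
  have hcomm : |mulConvFract g t - c| = |c - mulConvFract g t| := abs_sub_comm _ _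
  rw [hcomm] at habs
  linarith

lemma mulConvFract_abs_le (g : ℝ → ℝ) (hg : IntegrableOn g (Ioi 0) volume) {t : ℝ}
    (ht : 0 < t) : |mulConvFract g t| ≤ (∫ x in Ioi 0, |g x|) / t := by
  have h1 : |mulConvFract g t| ≤ ∫ x in Ioi 0, |Int.fract (x / t) * g x / x| :=
    abs_setIntegral_le _ _
  have h2 : (∫ x in Ioi 0, |Int.fract (x / t) * g x / x|) ≤ ∫ x in Ioi 0, |g x| / t := by
    apply setIntegral_mono_on (integrableOn_kernel g hg ht).abs (hg.abs.div_const t)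
      measurableSet_Ioi
    intro x hx
    exact abs_kernel_le ht hx (g x)
  rw [integral_div] at h2
  linarith

lemma mulConvFract_sm (g : ℝ → ℝ) (hg : IntegrableOn g (Ioi 0) volume) :
    StronglyMeasurable (mulConvFract g) := by
  set g' := hg.1.mk g with hg'def
  have hsm : StronglyMeasurable g' := hg.1.stronglyMeasurable_mk
  have heq : g =ᵐ[volume.restrict (Ioi 0)] g' := hg.1.ae_eq_mk
  have hfun : mulConvFract g = mulConvFract g' := by
    funext t
    exact integral_congr_ae (heq.mono fun x hx => by simp only []; rw [hx])
  rw [hfun]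
  have hjoint : StronglyMeasurable (fun p : ℝ × ℝ => Int.fract (p.2 / p.1) * g' p.2 / p.2) :=
    (((measurable_fract.comp (measurable_snd.div measurable_fst)).mul
      (hsm.measurable.comp measurable_snd)).div measurable_snd).stronglyMeasurable
  exact hjoint.integral_prod_right' (ν := volume.restrict (Ioi 0))

lemma memLp_inv (M : ℝ) (hM : 0 < M) :
    MemLp (fun t : ℝ => t⁻¹) 2 (volume.restrict (Ioi M)) := by
  rw [memLp_two_iff_integrable_sq measurable_inv.aestronglyMeasurable]
  have h := integrableOn_Ioi_rpow_of_lt (by norm_num : (-2:ℝ) < -1) hM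
  apply h.congr_fun ?_ measurableSet_Ioi
  intro t htm
  have ht : (0:ℝ) < t := hM.trans htm
  simp only
  rw [show (-2:ℝ) = -((2:ℕ):ℝ) by norm_num, Real.rpow_neg ht.le, Real.rpow_natCast, inv_pow]

lemma integral_inv_sq (M : ℝ) (hM : 0 < M) :
    (∫ t in Ioi M, (t⁻¹) ^ 2) = M⁻¹ := by
  have heq : EqOn (fun t : ℝ => (t⁻¹) ^ 2) (fun t : ℝ => t ^ (-2:ℝ)) (Ioi M) := by
    intro t htm
    have ht : (0:ℝ) < t := hM.trans htm
    simp only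
    rw [show (-2:ℝ) = -((2:ℕ):ℝ) by norm_num, Real.rpow_neg ht.le, Real.rpow_natCast, inv_pow]
  rw [setIntegral_congr_fun measurableSet_Ioi heq,
    integral_Ioi_rpow_of_lt (by norm_num : (-2:ℝ) < -1) hM]
  norm_num
  rw [Real.rpow_neg_one]

lemma memLp_mulConvFract (M : ℝ) (hM : 0 < M) (g : ℝ → ℝ)
    (hg : IntegrableOn g (Ioi 0) volume) :
    MemLp (mulConvFract g) 2 (volume.restrict (Ioi M)) := by
  set C := ∫ x in Ioi 0, |g x| with hCdef
  have hC : 0 ≤ C := integral_nonneg fun x => abs_nonneg _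
  apply MemLp.of_le ((memLp_inv M hM).const_mul C)
    (mulConvFract_sm g hg).aestronglyMeasurable
  filter_upwards [ae_restrict_mem measurableSet_Ioi] with t htm
  have ht : (0:ℝ) < t := hM.trans htm
  rw [Real.norm_eq_abs, Real.norm_eq_abs]
  calc |mulConvFract g t| ≤ C / t := mulConvFract_abs_le g hg ht
    _ = C * t⁻¹ := div_eq_mul_inv _ _
    _ ≤ |C * t⁻¹| := le_abs_self _

/-- for `M > 0`, `g` satisfying Assumption (M) and `φ` square integrable
on `(0,∞)`,
`(∫₀^M g)² ≤ 3M ∫_M^∞ (φ - g^×)² + 3M ∫_M^∞ φ² + 3 (∫_M^∞ |g|)²`. -/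
theorem stmt7 (M : ℝ) (hM : 0 < M) (g : ℝ → ℝ)
    (hM1 : IntegrableOn g (Ioi 0) volume)
    (hM2 : IntegrableOn (fun x => g x / x) (Ioi 0) volume)
    (φ : ℝ → ℝ) (hφ : MemLp φ 2 (volume.restrict (Ioi 0))) :
    (∫ x in Ioo (0 : ℝ) M, g x) ^ 2 ≤
      3 * M * (∫ t in Ioi M, (φ t - mulConvFract g t) ^ 2) +
      3 * M * (∫ t in Ioi M, φ t ^ 2) +
      3 * (∫ x in Ioi M, |g x|) ^ 2 := by
  set A := ∫ x in Ioo (0:ℝ) M, g x with hAdef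
  set R := ∫ x in Ioi M, |g x| with hRdef
  have hR : 0 ≤ R := integral_nonneg fun x => abs_nonneg _
  have hφM : MemLp φ 2 (volume.restrict (Ioi M)) :=
    hφ.mono_measure (Measure.restrict_mono (Ioi_subset_Ioi hM.le) le_rfl)
  have hmcf : MemLp (mulConvFract g) 2 (volume.restrict (Ioi M)) :=
    memLp_mulConvFract M hM g hM1
  have hI1 : IntegrableOn (fun t => (φ t - mulConvFract g t) ^ 2) (Ioi M) volume := by
    have := (hφM.sub hmcf).integrable_sq
    simpa [Pi.sub_apply, IntegrableOn] using this
  have hI2 : IntegrableOn (fun t => φ t ^ 2) (Ioi M) volume := hφM.integrable_sq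
  have hinvsq : IntegrableOn (fun t : ℝ => (t⁻¹) ^ 2) (Ioi M) volume :=
    (memLp_inv M hM).integrable_sq
  have hpt : ∀ t ∈ Ioi M, A ^ 2 * (t⁻¹) ^ 2
      ≤ 3 * (φ t - mulConvFract g t) ^ 2 + 3 * φ t ^ 2 + 3 * R ^ 2 * (t⁻¹) ^ 2 := by
    intro t htm
    have ht : (0:ℝ) < t := hM.trans htm
    have hkey := key_bound M hM g hM1 htm (φ t)
    set a := |φ t - mulConvFract g t| with ha'
    set b := |φ t| with hb'
    have h1 : |A| * t⁻¹ ≤ a + b + R * t⁻¹ := by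
      have h := mul_le_mul_of_nonneg_right hkey (inv_nonneg.mpr ht.le)
      calc |A| * t⁻¹ ≤ (t * a + t * b + R) * t⁻¹ := h
        _ = a + b + R * t⁻¹ := by field_simp
    have h2 : (|A| * t⁻¹) ^ 2 ≤ (a + b + R * t⁻¹) ^ 2 :=
      pow_le_pow_left₀ (mul_nonneg (abs_nonneg _) (inv_nonneg.mpr ht.le)) h1 2
    have h3 : A ^ 2 * (t⁻¹) ^ 2 = (|A| * t⁻¹) ^ 2 := by rw [mul_pow, sq_abs]
    have h4 : (a + b + R * t⁻¹) ^ 2 ≤ 3 * a ^ 2 + 3 * b ^ 2 + 3 * (R * t⁻¹) ^ 2 := by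
      nlinarith [sq_nonneg (a - b), sq_nonneg (a - R * t⁻¹), sq_nonneg (b - R * t⁻¹)]
    have h5 : a ^ 2 = (φ t - mulConvFract g t) ^ 2 := sq_abs _
    have h6 : b ^ 2 = φ t ^ 2 := sq_abs _
    have h7 : (R * t⁻¹) ^ 2 = R ^ 2 * (t⁻¹) ^ 2 := mul_pow _ _ _
    linarith [h2, h3.le, h3.ge, h4]
  have hRHSint : IntegrableOn
      (fun t => 3 * (φ t - mulConvFract g t) ^ 2 + 3 * φ t ^ 2 + 3 * R ^ 2 * (t⁻¹) ^ 2)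
      (Ioi M) volume := by
    have h3 : IntegrableOn (fun t : ℝ => 3 * R ^ 2 * (t⁻¹) ^ 2) (Ioi M) volume :=
      hinvsq.const_mul (3 * R ^ 2)
    exact ((hI1.const_mul 3).add (hI2.const_mul 3)).add h3
  have hmono : (∫ t in Ioi M, A ^ 2 * (t⁻¹) ^ 2)
      ≤ ∫ t in Ioi M,
          (3 * (φ t - mulConvFract g t) ^ 2 + 3 * φ t ^ 2 + 3 * R ^ 2 * (t⁻¹) ^ 2) :=
    setIntegral_mono_on (hinvsq.const_mul (A ^ 2)) hRHSint measurableSet_Ioi hpt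
  have hL : (∫ t in Ioi M, A ^ 2 * (t⁻¹) ^ 2) = A ^ 2 * M⁻¹ := by
    rw [integral_const_mul, integral_inv_sq M hM]
  have hRm : (∫ t in Ioi M,
        (3 * (φ t - mulConvFract g t) ^ 2 + 3 * φ t ^ 2 + 3 * R ^ 2 * (t⁻¹) ^ 2))
      = 3 * (∫ t in Ioi M, (φ t - mulConvFract g t) ^ 2) + 3 * (∫ t in Ioi M, φ t ^ 2)
        + 3 * R ^ 2 * M⁻¹ := by
    have hI12 : IntegrableOn
        (fun t => 3 * (φ t - mulConvFract g t) ^ 2 + 3 * φ t ^ 2) (Ioi M) volume :=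
      (hI1.const_mul 3).add (hI2.const_mul 3)
    rw [integral_add hI12 (hinvsq.const_mul (3 * R ^ 2)),
      integral_add (hI1.const_mul 3) (hI2.const_mul 3),
      integral_const_mul, integral_const_mul, integral_const_mul, integral_inv_sq M hM]
  rw [hL, hRm] at hmono
  have hfin := mul_le_mul_of_nonneg_left hmono hM.le
  have hMne : M ≠ 0 := hM.ne'
  have e1 : M * (A ^ 2 * M⁻¹) = A ^ 2 := by field_simp
  have e2 : M * (3 * (∫ t in Ioi M, (φ t - mulConvFract g t) ^ 2)
        + 3 * (∫ t in Ioi M, φ t ^ 2) + 3 * R ^ 2 * M⁻¹)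
      = 3 * M * (∫ t in Ioi M, (φ t - mulConvFract g t) ^ 2)
        + 3 * M * (∫ t in Ioi M, φ t ^ 2) + 3 * R ^ 2 := by
    field_simp
  rw [e1, e2] at hfin
  linarith
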